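/- Let M be a module, N a direct summand of M, and m1, m2 ∈ N. If m1 ≤_M m2 as elements of the module N (using endomorphisms of N), then m1 ≤_M m2 as elements of M (using endomorphisms of M). -/

import Mathlib

open MulOpposite

/-- The Mitsch relation on a right R-module (encoded via `Module Rᵐᵒᵖ M`). -/
def MitschLE {R M : Type*} [Ring R] [AddCommGroup M] [Module Rᵐᵒᵖ M]
    (m1 m2 : M) : Prop :=
  ∃ (f : M →ₗ[Rᵐᵒᵖ] M) (a : R), m1 = op a • m2 ∧ m1 = f m2 ∧ m1 = f m1

/-- if `N` is a direct summand of `M` (with complement `K`) and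
`m1 ≤_M m2` holds in the module `N`, then it holds in `M`. -/
theorem mitsch_of_directSummand {R M : Type*} [Ring R] [AddCommGroup M]
    [Module Rᵐᵒᵖ M] (N K : Submodule Rᵐᵒᵖ M) (hcompl : IsCompl N K)
    (m1 m2 : N) (h : MitschLE (R := R) m1 m2) :
    MitschLE (R := R) (m1 : M) (m2 : M) := by
  obtain ⟨f, a, h1, h2, h3⟩ := h
  refine ⟨N.subtype ∘ₗ f ∘ₗ N.projectionOnto K hcompl, a, ?_, ?_, ?_⟩
  · simpa using congrArg Subtype.val h1
  · simp [Submodule.projectionOnto_apply_left, ← h2]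
  · simp [Submodule.projectionOnto_apply_left, ← h3]
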